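/- Uniform-in-time bound on Q along good trajectories: assume Φ_t : X₀ → X₀ is a one-parameter group with Q(Φ_{t+s}(x)) = Q(Φ_t(Φ_s(x))) and Q(Φ_t(x)) ≤ C₀{Q(x) log(e+Q(x)) + t⁴} for all x ∈ X₀ and t ≥ 0. Let δ > 1 and let x ∈ X₀ be such that there exists n₀ ∈ ℕ with Q(Φ_k(x)) ≤ (log k)^δ for every integer k ≥ n₀. Then there exist constants C > 0 and t₀ > 0 (depending on x, n₀, C₀, δ) such that sup_{0≤s≤t} Q(Φ_s(x)) ≤ C (log t)^δ log log t for all t ≥ t₀. -/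
import Mathlib


open MeasureTheory Real Filter
open scoped ENNReal

noncomputable section

/-- A site of the `d`-dimensional integer lattice. -/
abbrev Site (d : ℕ) := Fin d → ℤ

/-- A configuration: at each site, a position `q` and a momentum `p`. -/
abbrev Conf (d : ℕ) := Site d → ℝ × ℝ

/-- ℓ¹ norm on the lattice. -/
def lnorm {d : ℕ} (ν : Site d) : ℤ := ∑ ℓ, |ν ℓ|

/-- ℓ¹ distance on the lattice. -/
def ldist {d : ℕ} (i j : Site d) : ℤ := ∑ ℓ, |i ℓ - j ℓ|

/-- The cube `Λ_{ν,k}` of center `ν` and side `2k+1`. -/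
def cube {d : ℕ} (ν : Site d) (k : ℕ) : Finset (Site d) :=
  Fintype.piFinset fun ℓ => Finset.Icc (ν ℓ - (k : ℤ)) (ν ℓ + (k : ℤ))

/-- The local energy `W_{ν,k}(x)`. -/
noncomputable def Wen {d : ℕ} (U : Polynomial ℝ) (K : ℝ) (ν : Site d) (k : ℕ)
    (x : Conf d) : ℝ :=
  (∑ i ∈ cube ν k, ((x i).2 ^ 2 / 2 + U.eval (x i).1 + 1)) +
    K / 4 * ∑ i ∈ cube ν k, ∑ j ∈ cube ν k,
      (if ldist i j = 1 then ((x i).1 - (x j).1) ^ 2 else 0)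

/-- The functional `Q(x) = sup_ν sup_{k > log^{1/d}(e+|ν|)} W_{ν,k}(x)/(2k+1)^d`,
with values in `[0,∞]`. -/
noncomputable def Qen {d : ℕ} (U : Polynomial ℝ) (K : ℝ) (x : Conf d) : ℝ≥0∞ :=
  ⨆ ν : Site d, ⨆ k : ℕ,
    ⨆ _ : Real.log (Real.exp 1 + (lnorm ν : ℝ)) ^ ((1 : ℝ) / (d : ℝ)) < (k : ℝ),
      ENNReal.ofReal (Wen U K ν k x / (2 * (k : ℝ) + 1) ^ d)

/-- The good set of configurations `X₀ = {x : Q(x) < ∞}`. -/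
def X0 (d : ℕ) (U : Polynomial ℝ) (K : ℝ) : Set (Conf d) := {x | Qen U K x < ⊤}

/-- Uniform-in-time bound on `Q` along good trajectories: if `Φ` is a one-parameter
group with `Q(Φ_t(x)) ≤ C₀{Q(x) log(e+Q(x)) + t⁴}` for `t ≥ 0`, and
`Q(Φ_k(x)) ≤ (log k)^δ` for all integers `k ≥ n₀`, then
`sup_{0≤s≤t} Q(Φ_s(x)) ≤ C (log t)^δ log log t` for all `t ≥ t₀`. -/
theorem statement18 {d : ℕ} (hd : 0 < d) (U : Polynomial ℝ) (hUdeg : U.degree = 4)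
    (hUpos : ∀ y : ℝ, 0 ≤ U.eval y) (hUlead : 0 < U.leadingCoeff)
    (K : ℝ) (hK : 0 < K)
    (Φ : ℝ → Conf d → Conf d)
    (hmap : ∀ t : ℝ, ∀ y ∈ X0 d U K, Φ t y ∈ X0 d U K)
    (hgroup : ∀ s t : ℝ, ∀ y ∈ X0 d U K, Φ (t + s) y = Φ t (Φ s y))
    (C₀ : ℝ) (hC₀ : 0 < C₀)
    (hQbound : ∀ y ∈ X0 d U K, ∀ t : ℝ, 0 ≤ t →
      Qen U K (Φ t y) ≤ ENNReal.ofReal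
        (C₀ * ((Qen U K y).toReal *
          Real.log (Real.exp 1 + (Qen U K y).toReal) + t ^ 4)))
    (δ : ℝ) (hδ : 1 < δ)
    (x : Conf d) (hx : x ∈ X0 d U K) (n₀ : ℕ)
    (hgood : ∀ k : ℕ, n₀ ≤ k → Qen U K (Φ k x) ≤ ENNReal.ofReal (Real.log k ^ δ)) :
    ∃ C > (0:ℝ), ∃ t₀ > (0:ℝ), ∀ t : ℝ, t₀ ≤ t → ∀ s ∈ Set.Icc (0:ℝ) t,
      (Qen U K (Φ s x)).toReal ≤ C * Real.log t ^ δ * Real.log (Real.log t) := by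
    classical
  set Qx := (Qen U K x).toReal with hQxdef
  have hQx0 : 0 ≤ Qx := ENNReal.toReal_nonneg
  have hexp2 : (2:ℝ) ≤ Real.exp 1 := by
    have := Real.add_one_le_exp 1; linarith
  have hlogE : (0:ℝ) ≤ Real.log (Real.exp 1 + Qx) :=
    Real.log_nonneg (by linarith)
  set A := C₀ * (Qx * Real.log (Real.exp 1 + Qx) + ((n₀:ℝ)+1)^4) with hAdef
  have hA0 : 0 ≤ A := by
    apply mul_nonneg hC₀.le
    have : (0:ℝ) ≤ ((n₀:ℝ)+1)^4 := by positivity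
    nlinarith [mul_nonneg hQx0 hlogE]
  have hC2 : 0 < C₀ * (δ + 2) := mul_pos hC₀ (by linarith)
  refine ⟨C₀ * (δ + 2) + A + 1, by linarith, Real.exp (Real.exp 1),
    Real.exp_pos _, ?_⟩
  intro t ht s hs
  obtain ⟨hs0, hst⟩ := hs
  have ht0 : 0 < t := lt_of_lt_of_le (Real.exp_pos _) ht
  have hlt : Real.exp 1 ≤ Real.log t := by
    have := Real.log_le_log (Real.exp_pos (Real.exp 1)) ht
    rwa [Real.log_exp] at this
  have h1lt : 1 ≤ Real.log t := by linarith
  have hllt : 1 ≤ Real.log (Real.log t) := by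
    have := Real.log_le_log (Real.exp_pos 1) hlt
    rwa [Real.log_exp] at this
  set P := Real.log t ^ δ with hPdef
  have hP1 : 1 ≤ P := by
    calc (1:ℝ) = (1:ℝ) ^ δ := (Real.one_rpow δ).symm
    _ ≤ P := Real.rpow_le_rpow zero_le_one h1lt (by linarith)
  have hPL : Real.log t ≤ P := by
    calc Real.log t = Real.log t ^ (1:ℝ) := (Real.rpow_one _).symm
    _ ≤ P := Real.rpow_le_rpow_of_exponent_le h1lt hδ.le
  have hPll : 1 ≤ P * Real.log (Real.log t) := by nlinarith
  rcases le_total s ((n₀:ℝ)+1) with hcase | hcase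
  · -- small times: use the bound from x directly
    have hb := hQbound x hx s hs0
    have hnn : 0 ≤ C₀ * (Qx * Real.log (Real.exp 1 + Qx) + s^4) := by
      apply mul_nonneg hC₀.le
      nlinarith [mul_nonneg hQx0 hlogE, pow_nonneg hs0 4]
    have htr : (Qen U K (Φ s x)).toReal ≤
        C₀ * (Qx * Real.log (Real.exp 1 + Qx) + s^4) :=
      ENNReal.toReal_le_of_le_ofReal hnn hb
    have hs4 : s^4 ≤ ((n₀:ℝ)+1)^4 := pow_le_pow_left₀ hs0 hcase 4
    have hA : (Qen U K (Φ s x)).toReal ≤ A := by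
      refine le_trans htr ?_
      rw [hAdef]
      nlinarith
    calc (Qen U K (Φ s x)).toReal ≤ A := hA
    _ ≤ A * (P * Real.log (Real.log t)) := le_mul_of_one_le_right hA0 hPll
    _ ≤ (C₀ * (δ + 2) + A + 1) * (P * Real.log (Real.log t)) := by
        apply mul_le_mul_of_nonneg_right (by linarith) (by linarith)
    _ = (C₀ * (δ + 2) + A + 1) * P * Real.log (Real.log t) := by ring
  · -- large times
    set k : ℕ := ⌊s⌋₊ with hkdef
    have hk : n₀ + 1 ≤ k := Nat.le_floor (by push_cast; linarith)
    have hk1 : 1 ≤ k := by omega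
    have hk1R : (1:ℝ) ≤ (k:ℝ) := by exact_mod_cast hk1
    have hks : (k:ℝ) ≤ s := Nat.floor_le hs0
    have hsk1 : s < (k:ℝ) + 1 := Nat.lt_floor_add_one s
    set r := s - (k:ℝ) with hrdef
    have hr0 : 0 ≤ r := by simp [hrdef]; linarith
    have hr1 : r ≤ 1 := by simp [hrdef]; linarith
    set y := Φ (k:ℝ) x with hydef
    have hy : y ∈ X0 d U K := hmap (k:ℝ) x hx
    have hΦs : Φ s x = Φ r y := by
      rw [show s = r + (k:ℝ) by ring]
      exact hgroup (k:ℝ) r x hx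
    set L := (Qen U K y).toReal with hLdef
    have hL0 : 0 ≤ L := ENNReal.toReal_nonneg
    have hlogk0 : 0 ≤ Real.log (k:ℝ) := Real.log_nonneg hk1R
    have hLk : L ≤ Real.log (k:ℝ) ^ δ :=
      ENNReal.toReal_le_of_le_ofReal (Real.rpow_nonneg hlogk0 δ)
        (hgood k (by omega))
    have hlogk : Real.log (k:ℝ) ≤ Real.log t :=
      Real.log_le_log (by linarith) (le_trans hks hst)
    have hLP : L ≤ P :=
      le_trans hLk (Real.rpow_le_rpow hlogk0 hlogk (by linarith))
    have hlogL0 : 0 ≤ Real.log (Real.exp 1 + L) :=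
      Real.log_nonneg (by linarith)
    have hlog2le : Real.log 2 ≤ 1 := by
      have := Real.log_le_log two_pos hexp2
      rwa [Real.log_exp] at this
    have hlogeL : Real.log (Real.exp 1 + L) ≤
        (1 + δ) * Real.log (Real.log t) := by
      have h2P : Real.exp 1 + L ≤ 2 * P := by linarith
      have hstep : Real.log (Real.exp 1 + L) ≤ Real.log (2 * P) :=
        Real.log_le_log (by positivity) h2P
      have hP0 : (0:ℝ) < P := by linarith
      have hmul : Real.log (2 * P) = Real.log 2 + Real.log P :=
        Real.log_mul two_ne_zero (ne_of_gt hP0)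
      have hrp : Real.log P = δ * Real.log (Real.log t) :=
        Real.log_rpow (by linarith) δ
      rw [hmul, hrp] at hstep
      have hexpand : (1 + δ) * Real.log (Real.log t) =
          Real.log (Real.log t) + δ * Real.log (Real.log t) := by ring
      linarith
    have hb := hQbound y hy r hr0
    have hnn : 0 ≤ C₀ * (L * Real.log (Real.exp 1 + L) + r^4) := by
      exact mul_nonneg hC₀.le
        (add_nonneg (mul_nonneg hL0 hlogL0) (pow_nonneg hr0 4))
    have htr : (Qen U K (Φ s x)).toReal ≤
        C₀ * (L * Real.log (Real.exp 1 + L) + r^4) := by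
      rw [hΦs]
      exact ENNReal.toReal_le_of_le_ofReal hnn hb
    have hr4 : r^4 ≤ 1 := by
      calc r^4 ≤ 1^4 := pow_le_pow_left₀ hr0 hr1 4
      _ = 1 := one_pow 4
    have hLmul : L * Real.log (Real.exp 1 + L) ≤
        P * ((1 + δ) * Real.log (Real.log t)) :=
      mul_le_mul hLP hlogeL hlogL0 (by linarith)
    have hsum : L * Real.log (Real.exp 1 + L) + r^4 ≤
        (δ + 2) * (P * Real.log (Real.log t)) := by
      have heq : (δ + 2) * (P * Real.log (Real.log t)) =
          P * ((1 + δ) * Real.log (Real.log t)) + P * Real.log (Real.log t) := by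
        ring
      linarith
    calc (Qen U K (Φ s x)).toReal
        ≤ C₀ * (L * Real.log (Real.exp 1 + L) + r^4) := htr
    _ ≤ C₀ * ((δ + 2) * (P * Real.log (Real.log t))) :=
        mul_le_mul_of_nonneg_left hsum hC₀.le
    _ = (C₀ * (δ + 2)) * (P * Real.log (Real.log t)) := by ring
    _ ≤ (C₀ * (δ + 2) + A + 1) * (P * Real.log (Real.log t)) := by
        apply mul_le_mul_of_nonneg_right (by linarith) (by linarith)
    _ = (C₀ * (δ + 2) + A + 1) * P * Real.log (Real.log t) := by ring
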